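/- Let X and Y be Polish spaces and let c = d^p where d is a pseudo-metric on X × Y and p ≥ 1. Let γ and γ' be probability measures on X × Y with marginals (μ, ν) and (μ', ν') respectively, such that τ_c(γ) < ∞ and τ_c(γ') < ∞. Then |τ_c(γ)^{1/p} − τ_c(γ')^{1/p}| ≤ T_c(γ, γ')^{1/p} + T_c(μ ⊗ ν, μ' ⊗ ν')^{1/p}. -/

import Mathlib

open MeasureTheory ENNReal Filter Topology ProbabilityTheory

/-- The optimal transport cost between two measures `μ` and `ν` on a space `Z`
with base cost `c`. -/
noncomputable def otCost {Z : Type*} [MeasurableSpace Z]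
    (c : Z → Z → ℝ≥0∞) (μ ν : Measure Z) : ℝ≥0∞ :=
  ⨅ (π : Measure (Z × Z)) (_ : π.map Prod.fst = μ ∧ π.map Prod.snd = ν),
    ∫⁻ p, c p.1 p.2 ∂π

/-- The transport dependency of a measure `γ` on `X × Y`. -/
noncomputable def tdep {X Y : Type*} [MeasurableSpace X] [MeasurableSpace Y]
    (c : X × Y → X × Y → ℝ≥0∞) (γ : Measure (X × Y)) : ℝ≥0∞ :=
  otCost c γ ((γ.map Prod.fst).prod (γ.map Prod.snd))

lemma otCost_le_lintegral {Z : Type*} [MeasurableSpace Z]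
    {c : Z → Z → ℝ≥0∞} {μ ν : Measure Z} (π : Measure (Z × Z))
    (h1 : π.map Prod.fst = μ) (h2 : π.map Prod.snd = ν) :
    otCost c μ ν ≤ ∫⁻ q, c q.1 q.2 ∂π :=
  iInf₂_le π ⟨h1, h2⟩

lemma ennreal_rpow_iInf {ι : Sort*} (f : ι → ℝ≥0∞) {r : ℝ} (hr : 0 < r) :
    (⨅ i, f i) ^ r = ⨅ i, f i ^ r := by
  have h := (ENNReal.orderIsoRpow r hr).map_iInf f
  simp only [ENNReal.orderIsoRpow_apply] at h
  exact h

lemma otCost_rpow_triangle {Z : Type*} [MeasurableSpace Z] [StandardBorelSpace Z]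
    {p : ℝ} (hp : 1 ≤ p) {d : Z → Z → ℝ≥0∞}
    (hd : Measurable (Function.uncurry d))
    (htri : ∀ a b c, d a c ≤ d a b + d b c)
    (μ ν κ : Measure Z) [IsProbabilityMeasure μ] [IsProbabilityMeasure ν]
    [IsProbabilityMeasure κ] :
    otCost (fun a b => d a b ^ p) μ κ ^ (1 / p)
      ≤ otCost (fun a b => d a b ^ p) μ ν ^ (1 / p)
        + otCost (fun a b => d a b ^ p) ν κ ^ (1 / p) := by
  have hp0 : (0 : ℝ) < p := lt_of_lt_of_le one_pos hp
  have hr : (0 : ℝ) < 1 / p := by positivity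
  -- rewrite RHS rpow of infima
  have hrw : ∀ (μ' ν' : Measure Z), otCost (fun a b => d a b ^ p) μ' ν' ^ (1 / p)
      = ⨅ (π : Measure (Z × Z)) (_ : π.map Prod.fst = μ' ∧ π.map Prod.snd = ν'),
          (∫⁻ q, d q.1 q.2 ^ p ∂π) ^ (1 / p) := by
    intro μ' ν'
    rw [otCost, ennreal_rpow_iInf _ hr]
    exact iInf_congr fun π => ennreal_rpow_iInf _ hr
  rw [hrw μ ν, hrw ν κ]
  simp_rw [ENNReal.iInf_add, ENNReal.add_iInf]
  refine le_iInf fun π1 => le_iInf fun h1 => le_iInf fun π2 => le_iInf fun h2 => ?_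
  -- π1 couples (μ, ν), π2 couples (ν, κ)
  haveI : IsProbabilityMeasure π1 := by
    constructor
    have h := congrArg (fun m : Measure Z => m Set.univ) h1.1
    simpa [Measure.map_apply measurable_fst MeasurableSet.univ] using h
  haveI : IsProbabilityMeasure π2 := by
    constructor
    have h := congrArg (fun m : Measure Z => m Set.univ) h2.1
    simpa [Measure.map_apply measurable_fst MeasurableSet.univ] using h
  haveI : Nonempty Z := by
    by_contra h
    rw [not_nonempty_iff] at h
    have h0 : μ Set.univ = 1 := measure_univ
    rw [Set.univ_eq_empty_iff.mpr h, measure_empty] at h0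
    exact zero_ne_one h0
  set ρ1 : Measure (Z × Z) := π1.map Prod.swap with hρ1
  haveI : IsProbabilityMeasure ρ1 := Measure.isProbabilityMeasure_map measurable_swap.aemeasurable
  have hρ1fst : ρ1.fst = ν := by
    rw [hρ1, Measure.fst, Measure.map_map measurable_fst measurable_swap]
    exact h1.2
  have hπ2fst : π2.fst = ν := h2.1
  set K1 := ρ1.condKernel with hK1
  set K2 := π2.condKernel with hK2
  set π : Measure (Z × Z × Z) := ν ⊗ₘ (K1 ×ₖ K2) with hπ
  -- marginal facts
  have hg1 : Measurable (fun ω : Z × Z × Z => (ω.1, ω.2.1)) :=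
    measurable_fst.prodMk (measurable_fst.comp measurable_snd)
  have hg2 : Measurable (fun ω : Z × Z × Z => (ω.1, ω.2.2)) :=
    measurable_fst.prodMk (measurable_snd.comp measurable_snd)
  have F1 : π.map (fun ω : Z × Z × Z => (ω.1, ω.2.1)) = ρ1 := by
    ext s hs
    rw [Measure.map_apply hg1 hs, hπ, Measure.compProd_apply (hg1 hs)]
    have hsec : ∀ b : Z, (K1 ×ₖ K2) b
        (Prod.mk b ⁻¹' ((fun ω : Z × Z × Z => (ω.1, ω.2.1)) ⁻¹' s))
        = K1 b (Prod.mk b ⁻¹' s) := by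
      intro b
      have hset : (Prod.mk b ⁻¹' ((fun ω : Z × Z × Z => (ω.1, ω.2.1)) ⁻¹' s))
          = (Prod.mk b ⁻¹' s) ×ˢ Set.univ := by
        ext ac; simp [Set.mem_prod]
      rw [hset, Kernel.prod_apply, Measure.prod_prod, measure_univ, mul_one]
    simp_rw [hsec]
    conv_rhs => rw [← ρ1.disintegrate ρ1.condKernel]
    rw [Measure.compProd_apply hs, hρ1fst]
  have F2 : π.map (fun ω : Z × Z × Z => (ω.1, ω.2.2)) = π2 := by
    ext s hs
    rw [Measure.map_apply hg2 hs, hπ, Measure.compProd_apply (hg2 hs)]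
    have hsec : ∀ b : Z, (K1 ×ₖ K2) b
        (Prod.mk b ⁻¹' ((fun ω : Z × Z × Z => (ω.1, ω.2.2)) ⁻¹' s))
        = K2 b (Prod.mk b ⁻¹' s) := by
      intro b
      have hset : (Prod.mk b ⁻¹' ((fun ω : Z × Z × Z => (ω.1, ω.2.2)) ⁻¹' s))
          = Set.univ ×ˢ (Prod.mk b ⁻¹' s) := by
        ext ac; simp [Set.mem_prod]
      rw [hset, Kernel.prod_apply, Measure.prod_prod, measure_univ, one_mul]
    simp_rw [hsec]
    conv_rhs => rw [← π2.disintegrate π2.condKernel]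
    rw [Measure.compProd_apply hs, hπ2fst]
  -- the glued coupling
  set θ : Measure (Z × Z) := π.map Prod.snd with hθ
  have hθfst : θ.map Prod.fst = μ := by
    rw [hθ, Measure.map_map measurable_fst measurable_snd]
    have : (Prod.fst ∘ Prod.snd : Z × Z × Z → Z) = Prod.snd ∘ (fun ω : Z × Z × Z => (ω.1, ω.2.1)) := rfl
    rw [this, ← Measure.map_map measurable_snd hg1, F1, hρ1,
      Measure.map_map measurable_snd measurable_swap]
    exact h1.1
  have hθsnd : θ.map Prod.snd = κ := by
    rw [hθ, Measure.map_map measurable_snd measurable_snd]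
    have : (Prod.snd ∘ Prod.snd : Z × Z × Z → Z) = Prod.snd ∘ (fun ω : Z × Z × Z => (ω.1, ω.2.2)) := rfl
    rw [this, ← Measure.map_map measurable_snd hg2, F2]
    exact h2.2
  -- measurability helpers
  have hc_meas : Measurable (fun q : Z × Z => d q.1 q.2 ^ p) :=
    (hd.comp (measurable_fst.prodMk measurable_snd)).pow_const p
  have hf : Measurable (fun ω : Z × Z × Z => d ω.2.1 ω.1) :=
    hd.comp ((measurable_fst.comp measurable_snd).prodMk measurable_fst)
  have hg : Measurable (fun ω : Z × Z × Z => d ω.1 ω.2.2) :=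
    hd.comp (measurable_fst.prodMk (measurable_snd.comp measurable_snd))
  -- cost computation
  have hm21 : Measurable (fun q : Z × Z => d q.2 q.1 ^ p) :=
    (hd.comp (measurable_snd.prodMk measurable_fst)).pow_const p
  have hcost1 : ∫⁻ ω, d ω.2.1 ω.1 ^ p ∂π = ∫⁻ q, d q.1 q.2 ^ p ∂π1 := by
    calc ∫⁻ ω, d ω.2.1 ω.1 ^ p ∂π
        = ∫⁻ q, d q.2 q.1 ^ p ∂(π.map (fun ω : Z × Z × Z => (ω.1, ω.2.1))) :=
          (lintegral_map hm21 hg1).symm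
      _ = ∫⁻ q, d q.2 q.1 ^ p ∂(π1.map Prod.swap) := by rw [F1]
      _ = ∫⁻ q, d q.1 q.2 ^ p ∂π1 := lintegral_map hm21 measurable_swap
  have hcost2 : ∫⁻ ω, d ω.1 ω.2.2 ^ p ∂π = ∫⁻ q, d q.1 q.2 ^ p ∂π2 := by
    calc ∫⁻ ω, d ω.1 ω.2.2 ^ p ∂π
        = ∫⁻ q, d q.1 q.2 ^ p ∂(π.map (fun ω : Z × Z × Z => (ω.1, ω.2.2))) :=
          (lintegral_map hc_meas hg2).symm
      _ = ∫⁻ q, d q.1 q.2 ^ p ∂π2 := by rw [F2]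
  -- main chain
  calc otCost (fun a b => d a b ^ p) μ κ ^ (1 / p)
      ≤ (∫⁻ q, d q.1 q.2 ^ p ∂θ) ^ (1 / p) :=
        ENNReal.rpow_le_rpow (otCost_le_lintegral θ hθfst hθsnd) (le_of_lt hr)
    _ = (∫⁻ ω, d ω.2.1 ω.2.2 ^ p ∂π) ^ (1 / p) := by
        rw [hθ, lintegral_map hc_meas measurable_snd]
    _ ≤ (∫⁻ ω, (d ω.2.1 ω.1 + d ω.1 ω.2.2) ^ p ∂π) ^ (1 / p) := by
        refine ENNReal.rpow_le_rpow (lintegral_mono fun ω => ?_) (le_of_lt hr)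
        exact ENNReal.rpow_le_rpow (htri _ _ _) (le_of_lt hp0)
    _ ≤ (∫⁻ ω, d ω.2.1 ω.1 ^ p ∂π) ^ (1 / p) + (∫⁻ ω, d ω.1 ω.2.2 ^ p ∂π) ^ (1 / p) :=
        ENNReal.lintegral_Lp_add_le hf.aemeasurable hg.aemeasurable hp
    _ = (∫⁻ q, d q.1 q.2 ^ p ∂π1) ^ (1 / p) + (∫⁻ q, d q.1 q.2 ^ p ∂π2) ^ (1 / p) := by
        rw [hcost1, hcost2]

lemma otCost_symm_le {Z : Type*} [MeasurableSpace Z] {c : Z → Z → ℝ≥0∞} (hc : Measurable fun q : Z × Z => c q.1 q.2)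
    (hsymm : ∀ a b, c a b = c b a) (μ ν : Measure Z) :
    otCost c ν μ ≤ otCost c μ ν := by
  refine le_iInf₂ fun π hπ => ?_
  refine le_trans (otCost_le_lintegral (π.map Prod.swap) ?_ ?_) ?_
  · rw [Measure.map_map measurable_fst measurable_swap]
    exact hπ.2
  · rw [Measure.map_map measurable_snd measurable_swap]
    exact hπ.1
  · rw [lintegral_map hc measurable_swap]
    simp only [Prod.fst_swap, Prod.snd_swap]
    refine le_of_eq (lintegral_congr fun q => ?_)
    exact hsymm q.2 q.1

lemma otCost_symm {Z : Type*} [MeasurableSpace Z] {c : Z → Z → ℝ≥0∞} (hc : Measurable fun q : Z × Z => c q.1 q.2)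
    (hsymm : ∀ a b, c a b = c b a) (μ ν : Measure Z) :
    otCost c μ ν = otCost c ν μ :=
  le_antisymm (otCost_symm_le hc hsymm ν μ) (otCost_symm_le hc hsymm μ ν)


/-- For costs `c = d^p` given by the `p`-th power of a lower
semicontinuous pseudo-metric `d` on `X × Y` with `p ≥ 1`, the transport dependency
satisfies the continuity bound
`|τ(γ)^{1/p} − τ(γ')^{1/p}| ≤ T_c(γ, γ')^{1/p} + T_c(μ ⊗ ν, μ' ⊗ ν')^{1/p}`. -/
theorem tdep_rpow_continuity_bound
    {X Y : Type*} [TopologicalSpace X] [PolishSpace X] [MeasurableSpace X] [BorelSpace X]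
    [TopologicalSpace Y] [PolishSpace Y] [MeasurableSpace Y] [BorelSpace Y]
    (p : ℝ) (hp : 1 ≤ p)
    (d : X × Y → X × Y → ℝ≥0∞)
    (hd_lsc : LowerSemicontinuous (Function.uncurry d))
    (hd_symm : ∀ z₁ z₂, d z₁ z₂ = d z₂ z₁)
    (hd_diag : ∀ z, d z z = 0)
    (hd_triangle : ∀ z₁ z₂ z₃, d z₁ z₃ ≤ d z₁ z₂ + d z₂ z₃)
    (c : X × Y → X × Y → ℝ≥0∞) (hc : ∀ z₁ z₂, c z₁ z₂ = d z₁ z₂ ^ p)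
    (γ γ' : Measure (X × Y)) [IsProbabilityMeasure γ] [IsProbabilityMeasure γ']
    (hfin : tdep c γ ≠ ∞) (hfin' : tdep c γ' ≠ ∞) :
    max (tdep c γ ^ (1 / p) - tdep c γ' ^ (1 / p))
        (tdep c γ' ^ (1 / p) - tdep c γ ^ (1 / p))
      ≤ otCost c γ γ' ^ (1 / p)
        + otCost c ((γ.map Prod.fst).prod (γ.map Prod.snd))
            ((γ'.map Prod.fst).prod (γ'.map Prod.snd)) ^ (1 / p) := by
  have hceq : c = fun a b => d a b ^ p := funext fun a => funext fun b => hc a b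
  subst hceq
  have hd_meas : Measurable (Function.uncurry d) := hd_lsc.measurable
  have hc_meas : Measurable fun q : (X × Y) × (X × Y) => d q.1 q.2 ^ p :=
    (hd_meas.comp (measurable_fst.prodMk measurable_snd)).pow_const p
  have hsymm : ∀ a b : X × Y, d a b ^ p = d b a ^ p := fun a b => by rw [hd_symm]
  haveI : IsProbabilityMeasure (γ.map Prod.fst) :=
    Measure.isProbabilityMeasure_map measurable_fst.aemeasurable
  haveI : IsProbabilityMeasure (γ.map Prod.snd) :=
    Measure.isProbabilityMeasure_map measurable_snd.aemeasurable
  haveI : IsProbabilityMeasure (γ'.map Prod.fst) :=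
    Measure.isProbabilityMeasure_map measurable_fst.aemeasurable
  haveI : IsProbabilityMeasure (γ'.map Prod.snd) :=
    Measure.isProbabilityMeasure_map measurable_snd.aemeasurable
  set m : Measure (X × Y) := (γ.map Prod.fst).prod (γ.map Prod.snd) with hm
  set m' : Measure (X × Y) := (γ'.map Prod.fst).prod (γ'.map Prod.snd) with hm'
  have tri : ∀ (α β δ : Measure (X × Y)) [IsProbabilityMeasure α] [IsProbabilityMeasure β]
      [IsProbabilityMeasure δ],
      otCost (fun a b => d a b ^ p) α δ ^ (1 / p)
        ≤ otCost (fun a b => d a b ^ p) α β ^ (1 / p)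
          + otCost (fun a b => d a b ^ p) β δ ^ (1 / p) :=
    fun α β δ _ _ _ => otCost_rpow_triangle hp hd_meas hd_triangle α β δ
  have hW : ∀ α β : Measure (X × Y),
      otCost (fun a b => d a b ^ p) α β = otCost (fun a b => d a b ^ p) β α :=
    otCost_symm hc_meas hsymm
  simp only [tdep]
  refine max_le ?_ ?_
  · rw [tsub_le_iff_right]
    calc otCost (fun a b => d a b ^ p) γ m ^ (1 / p)
        ≤ otCost (fun a b => d a b ^ p) γ γ' ^ (1 / p)
            + otCost (fun a b => d a b ^ p) γ' m ^ (1 / p) := tri γ γ' m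
      _ ≤ otCost (fun a b => d a b ^ p) γ γ' ^ (1 / p)
            + (otCost (fun a b => d a b ^ p) γ' m' ^ (1 / p)
              + otCost (fun a b => d a b ^ p) m' m ^ (1 / p)) :=
          add_le_add_right (tri γ' m' m) _
      _ = otCost (fun a b => d a b ^ p) γ γ' ^ (1 / p)
            + otCost (fun a b => d a b ^ p) m m' ^ (1 / p)
            + otCost (fun a b => d a b ^ p) γ' m' ^ (1 / p) := by
          rw [hW m' m]; ring
  · rw [tsub_le_iff_right]
    calc otCost (fun a b => d a b ^ p) γ' m' ^ (1 / p)
        ≤ otCost (fun a b => d a b ^ p) γ' γ ^ (1 / p)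
            + otCost (fun a b => d a b ^ p) γ m' ^ (1 / p) := tri γ' γ m'
      _ ≤ otCost (fun a b => d a b ^ p) γ' γ ^ (1 / p)
            + (otCost (fun a b => d a b ^ p) γ m ^ (1 / p)
              + otCost (fun a b => d a b ^ p) m m' ^ (1 / p)) :=
          add_le_add_right (tri γ m m') _
      _ = otCost (fun a b => d a b ^ p) γ γ' ^ (1 / p)
            + otCost (fun a b => d a b ^ p) m m' ^ (1 / p)
            + otCost (fun a b => d a b ^ p) γ m ^ (1 / p) := by
          rw [hW γ' γ]; ring
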